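/- Let (C, ⊗) be a locally presentable closed symmetric monoidal abelian category whose monoidal unit V is a finitely presented projective separator. Let f : X0 → X1 and g : Y0 → Y1 be morphisms of C all of whose sources and targets X0, X1, Y0, Y1 are finitely generated. Then the pushout product f □ g : (X0 ⊗ Y1) ⊔_{X0 ⊗ Y0} (X1 ⊗ Y0) → X1 ⊗ Y1 has finitely generated source and target; that is, f □ g is a finitely generated object of the arrow category Ar(C). -/

import Mathlib

open CategoryTheory CategoryTheory.Limits Opposite

universe v u

namespace Paper

variable {C : Type u} [Category.{v} C]

/-- The canonical comparison map `colim_α Hom(X, M_α) ⟶ Hom(X, colim_α M_α)` induced by the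
structure morphisms of a cocone `c` on a diagram `D`. -/
noncomputable def canonicalMap (X : C) {J : Type v} [SmallCategory J]
    (D : J ⥤ C) (c : Cocone D) :
    colimit (D ⋙ coyoneda.obj (op X)) → (X ⟶ c.pt) :=
  colimit.desc (D ⋙ coyoneda.obj (op X)) ((coyoneda.obj (op X)).mapCocone c)

/-- An object `X` is finitely presented if for every filtered inductive system the canonical map
`colim_α Hom(X, M_α) → Hom(X, colim_α M_α)` is bijective. -/
def IsFinitelyPresented (X : C) : Prop :=
  ∀ (J : Type v) [SmallCategory J] [IsFiltered J] (D : J ⥤ C) (c : Cocone D),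
    IsColimit c → Function.Bijective (canonicalMap X D c)

/-- An object `X` is finitely generated if for every filtered inductive system the canonical map
`colim_α Hom(X, M_α) → Hom(X, colim_α M_α)` is injective. -/
def IsFinitelyGenerated (X : C) : Prop :=
  ∀ (J : Type v) [SmallCategory J] [IsFiltered J] (D : J ⥤ C) (c : Cocone D),
    IsColimit c → Function.Injective (canonicalMap X D c)

/-- A small category `J` is `κ`-filtered if every diagram in `J` of size `< κ` admits a cocone. -/
def IsCardinalFiltered (J : Type v) [SmallCategory J] (κ : Cardinal.{v}) : Prop :=
  ∀ (K : Type v) [SmallCategory K], Cardinal.mk (Σ k k' : K, k ⟶ k') < κ →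
    ∀ F : K ⥤ J, Nonempty (Cocone F)

/-- An object `X` is `κ`-presentable if `Hom(X, -)` preserves `κ`-filtered colimits. -/
def IsCardinalPresentableObj (κ : Cardinal.{v}) (X : C) : Prop :=
  ∀ (J : Type v) [SmallCategory J], IsCardinalFiltered J κ →
    ∀ (D : J ⥤ C) (c : Cocone D), IsColimit c → Function.Bijective (canonicalMap X D c)

/-- A presentation of `X` as a `κ`-filtered colimit of objects belonging to `S`. -/
structure FilteredPresentation (κ : Cardinal.{v}) (S : Set C) (X : C) where
  J : Type v
  [cat : SmallCategory J]
  filtered : IsCardinalFiltered J κ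
  D : J ⥤ C
  mem : ∀ j, D.obj j ∈ S
  c : Cocone D
  isColimit : IsColimit c
  eq : c.pt = X

attribute [instance] FilteredPresentation.cat

/-- A category is locally presentable if it is cocomplete and there are a regular cardinal `κ`
and a set of `κ`-presentable objects such that every object is a `κ`-filtered colimit of
objects from this set. -/
class LocallyPresentable (C : Type u) [Category.{v} C] : Prop where
  hasColimits : HasColimits C
  presentable : ∃ κ : Cardinal.{v}, κ.IsRegular ∧ ∃ S : Set C, Small.{v} ↥S ∧
    (∀ X ∈ S, IsCardinalPresentableObj κ X) ∧ ∀ X : C, Nonempty (FilteredPresentation κ S X)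

instance (priority := 100) [LocallyPresentable C] : HasColimits C :=
  LocallyPresentable.hasColimits

end Paper

namespace Paper

open MonoidalCategory ZeroObject

variable {C : Type u} [Category.{v} C]

lemma canonicalMap_ι (X : C) {J : Type v} [SmallCategory J] (D : J ⥤ C) (c : Cocone D)
    (j : J) (x : X ⟶ D.obj j) :
    canonicalMap X D c (colimit.ι (D ⋙ coyoneda.obj (op X)) j x) = x ≫ c.ι.app j := by
  have h := colimit.ι_desc ((coyoneda.obj (op X)).mapCocone c) j
  exact ConcreteCategory.congr_hom h x

lemma isFinitelyGenerated_of_ext (X : C)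
    (h : ∀ (J : Type v) [SmallCategory J] [IsFiltered J] (D : J ⥤ C) (c : Cocone D),
      IsColimit c → ∀ (j : J) (u v : X ⟶ D.obj j), u ≫ c.ι.app j = v ≫ c.ι.app j →
        ∃ (k : J) (φ : j ⟶ k), u ≫ D.map φ = v ≫ D.map φ) :
    IsFinitelyGenerated X := by
  intro J _ _ D c hc a b hab
  obtain ⟨j1, u, rfl⟩ := Types.jointly_surjective' a
  obtain ⟨j2, v, rfl⟩ := Types.jointly_surjective' b
  have e1 : colimit.ι (D ⋙ coyoneda.obj (op X)) j1 u
      = colimit.ι (D ⋙ coyoneda.obj (op X)) (IsFiltered.max j1 j2)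
        (u ≫ D.map (IsFiltered.leftToMax j1 j2)) :=
    (Types.Colimit.w_apply (IsFiltered.leftToMax j1 j2)).symm
  have e2 : colimit.ι (D ⋙ coyoneda.obj (op X)) j2 v
      = colimit.ι (D ⋙ coyoneda.obj (op X)) (IsFiltered.max j1 j2)
        (v ≫ D.map (IsFiltered.rightToMax j1 j2)) :=
    (Types.Colimit.w_apply (IsFiltered.rightToMax j1 j2)).symm
  rw [e1, e2] at hab ⊢
  rw [canonicalMap_ι, canonicalMap_ι] at hab
  obtain ⟨k, φ, hk⟩ := h J D c hc (IsFiltered.max j1 j2)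
    (u ≫ D.map (IsFiltered.leftToMax j1 j2)) (v ≫ D.map (IsFiltered.rightToMax j1 j2)) hab
  calc colimit.ι (D ⋙ coyoneda.obj (op X)) (IsFiltered.max j1 j2)
        (u ≫ D.map (IsFiltered.leftToMax j1 j2))
      = colimit.ι (D ⋙ coyoneda.obj (op X)) k
          ((u ≫ D.map (IsFiltered.leftToMax j1 j2)) ≫ D.map φ) :=
        (Types.Colimit.w_apply φ).symm
    _ = colimit.ι (D ⋙ coyoneda.obj (op X)) k
          ((v ≫ D.map (IsFiltered.rightToMax j1 j2)) ≫ D.map φ) := by rw [hk]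
    _ = colimit.ι (D ⋙ coyoneda.obj (op X)) (IsFiltered.max j1 j2)
          (v ≫ D.map (IsFiltered.rightToMax j1 j2)) := Types.Colimit.w_apply φ

lemma ext_of_isFinitelyGenerated {X : C} (hX : IsFinitelyGenerated X)
    {J : Type v} [SmallCategory J] [IsFiltered J] {D : J ⥤ C} {c : Cocone D}
    (hc : IsColimit c) (j : J) (u v : X ⟶ D.obj j)
    (huv : u ≫ c.ι.app j = v ≫ c.ι.app j) :
    ∃ (k : J) (φ : j ⟶ k), u ≫ D.map φ = v ≫ D.map φ := by
  have heq : canonicalMap X D c (colimit.ι (D ⋙ coyoneda.obj (op X)) j u)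
      = canonicalMap X D c (colimit.ι (D ⋙ coyoneda.obj (op X)) j v) := by
    rw [canonicalMap_ι, canonicalMap_ι, huv]
  have h2 := hX J D c hc heq
  rw [Types.FilteredColimit.colimit_eq_iff] at h2
  obtain ⟨k, f, g, hfg⟩ := h2
  have hfg' : u ≫ D.map f = v ≫ D.map g := hfg
  refine ⟨IsFiltered.coeq f g, f ≫ IsFiltered.coeqHom f g, ?_⟩
  calc u ≫ D.map (f ≫ IsFiltered.coeqHom f g)
      = (u ≫ D.map f) ≫ D.map (IsFiltered.coeqHom f g) := by
        rw [D.map_comp, Category.assoc]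
    _ = (v ≫ D.map g) ≫ D.map (IsFiltered.coeqHom f g) := by rw [hfg']
    _ = v ≫ D.map (g ≫ IsFiltered.coeqHom f g) := by rw [D.map_comp, Category.assoc]
    _ = v ≫ D.map (f ≫ IsFiltered.coeqHom f g) := by rw [IsFiltered.coeq_condition f g]

lemma isFinitelyGenerated_of_jointlyEpi {ι : Type*} [Fintype ι] {x : ι → C} {X : C}
    (t : ∀ i, x i ⟶ X) (hx : ∀ i, IsFinitelyGenerated (x i))
    (hjoint : ∀ {Z : C} (a b : X ⟶ Z), (∀ i, t i ≫ a = t i ≫ b) → a = b) :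
    IsFinitelyGenerated X := by
  classical
  apply isFinitelyGenerated_of_ext
  intro J _ _ D c hc j u v huv
  have key : ∀ s : Finset ι, ∃ (k : J) (φ : j ⟶ k),
      ∀ i ∈ s, t i ≫ u ≫ D.map φ = t i ≫ v ≫ D.map φ := by
    intro s
    induction s using Finset.induction_on with
    | empty => exact ⟨j, 𝟙 j, by simp⟩
    | @insert i s _ ih =>
      obtain ⟨k, φ, hk⟩ := ih
      have hcond : (t i ≫ u ≫ D.map φ) ≫ c.ι.app k = (t i ≫ v ≫ D.map φ) ≫ c.ι.app k := by
        simp only [Category.assoc, c.w φ]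
        rw [huv]
      obtain ⟨k', ψ, hψ⟩ := ext_of_isFinitelyGenerated (hx i) hc k
        (t i ≫ u ≫ D.map φ) (t i ≫ v ≫ D.map φ) hcond
      refine ⟨k', φ ≫ ψ, ?_⟩
      intro i' hi'
      rcases Finset.mem_insert.mp hi' with h1 | h2
      · subst h1
        simpa only [D.map_comp, Category.assoc] using hψ
      · have h3 := congrArg (· ≫ D.map ψ) (hk i' h2)
        simpa only [D.map_comp, Category.assoc] using h3
  obtain ⟨k, φ, hk⟩ := key Finset.univ
  refine ⟨k, φ, hjoint _ _ fun i => ?_⟩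
  simpa only [Category.assoc] using hk i (Finset.mem_univ i)

lemma isFinitelyGenerated_of_epi {A X : C} (p : A ⟶ X) [Epi p]
    (hA : IsFinitelyGenerated A) : IsFinitelyGenerated X := by
  refine isFinitelyGenerated_of_jointlyEpi (ι := Unit) (fun _ => p) (fun _ => hA) ?_
  intro Z a b h
  exact (cancel_epi p).mp (h Unit.unit)

section Abelian

attribute [local instance] CategoryTheory.Abelian.hasFiniteBiproducts

variable [Abelian C]

lemma isFinitelyGenerated_biproduct {ι : Type*} [Fintype ι] (x : ι → C)
    (hx : ∀ i, IsFinitelyGenerated (x i)) : IsFinitelyGenerated (⨁ x) := by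
  refine isFinitelyGenerated_of_jointlyEpi (biproduct.ι x) hx ?_
  intro Z a b h
  exact biproduct.hom_ext' _ _ h

/-- The canonical map from a finite subcoproduct of copies of `V` to `X`. -/
noncomputable def eS (V X : C) (s : Finset (V ⟶ X)) :
    (⨁ fun (_ : {h // h ∈ s}) => V) ⟶ X :=
  biproduct.desc fun i => i.1

lemma eS_comp_π {V X : C} {s t : Finset (V ⟶ X)} (hst : s ≤ t) :
    eS V X s ≫ cokernel.π (eS V X t) = 0 := by
  apply biproduct.hom_ext'
  intro i
  have h1 : (i.1 : V ⟶ X) = biproduct.ι (fun (_ : {h // h ∈ t}) => V) ⟨i.1, hst i.2⟩ ≫ eS V X t := by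
    rw [eS, biproduct.ι_desc]
  have h2 : biproduct.ι (fun (_ : {h // h ∈ s}) => V) i ≫ eS V X s = (i.1 : V ⟶ X) := by
    rw [eS, biproduct.ι_desc]
  rw [comp_zero, ← Category.assoc, h2, h1, Category.assoc, cokernel.condition, comp_zero]

/-- The filtered diagram of cokernels of finite subcoproducts. -/
noncomputable def cokerDiagram (V X : C) : Finset (V ⟶ X) ⥤ C where
  obj s := cokernel (eS V X s)
  map {s t} φ := cokernel.desc _ (cokernel.π _) (eS_comp_π (leOfHom φ))
  map_id s := by
    rw [← cancel_epi (cokernel.π (eS V X s)), cokernel.π_desc, Category.comp_id]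
  map_comp {s t r} φ ψ := by
    rw [← cancel_epi (cokernel.π (eS V X s)), cokernel.π_desc, ← Category.assoc,
      cokernel.π_desc, cokernel.π_desc]

lemma π_comp_cokerDiagram_map {V X : C} {s t : Finset (V ⟶ X)} (φ : s ⟶ t) :
    cokernel.π (eS V X s) ≫ (cokerDiagram V X).map φ = cokernel.π (eS V X t) :=
  cokernel.π_desc _ _ _

lemma exists_epi_of_isFinitelyGenerated {V : C} (hV : IsSeparator V) {X : C}
    (hX : IsFinitelyGenerated X) : ∃ (s : Finset (V ⟶ X)), Epi (eS V X s) := by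
  letI : DecidableEq (V ⟶ X) := Classical.decEq _
  have happ : ∀ (s : Cocone (cokerDiagram V X)) (j : Finset (V ⟶ X)), s.ι.app j = 0 := by
    intro s j
    refine (cancel_epi (cokernel.π (eS V X j))).mp (Eq.trans ?_ comp_zero.symm)
    apply hV.def
    intro h
    have hle : j ≤ insert h j := Finset.subset_insert h j
    have hw : cokernel.π (eS V X j) ≫ s.ι.app j
        = cokernel.π (eS V X (insert h j)) ≫ s.ι.app (insert h j) := by
      rw [← s.w (homOfLE hle)]
      exact (Category.assoc _ _ _).symm.trans
        (congrArg (· ≫ s.ι.app (insert h j)) (π_comp_cokerDiagram_map (homOfLE hle)))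
    have h0 : h ≫ cokernel.π (eS V X (insert h j)) = 0 := by
      have h1 : h = biproduct.ι (fun (_ : {g // g ∈ insert h j}) => V)
          ⟨h, Finset.mem_insert_self h j⟩ ≫ eS V X (insert h j) := by
        rw [eS, biproduct.ι_desc]
      calc h ≫ cokernel.π (eS V X (insert h j))
          = biproduct.ι (fun (_ : {g // g ∈ insert h j}) => V) ⟨h, Finset.mem_insert_self h j⟩
              ≫ eS V X (insert h j) ≫ cokernel.π (eS V X (insert h j)) := by
            rw [← Category.assoc, ← h1]
        _ = 0 := by rw [cokernel.condition, comp_zero]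
    refine Eq.trans ?_ comp_zero.symm
    rw [hw]
    exact (Category.assoc _ _ _).symm.trans
      ((congrArg (· ≫ s.ι.app (insert h j)) h0).trans zero_comp)
  let c0 : Cocone (cokerDiagram V X) :=
    { pt := 0
      ι := { app := fun _ => 0, naturality := fun _ _ _ => by simp } }
  have hc0 : IsColimit c0 :=
    { desc := fun _ => 0
      fac := fun s j => by
        have := (happ s j).symm
        simpa [c0] using this
      uniq := fun s m _ => (isZero_zero C).eq_of_src m 0 }
  obtain ⟨t, φ, hφ⟩ := ext_of_isFinitelyGenerated hX hc0 (∅ : Finset (V ⟶ X))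
    (cokernel.π (eS V X ∅)) 0 (by exact comp_zero.trans comp_zero.symm)
  refine ⟨t, ?_⟩
  apply Preadditive.epi_of_cokernel_zero
  rw [← π_comp_cokerDiagram_map φ]
  exact hφ.trans zero_comp

end Abelian

end Paper

namespace Paper

open MonoidalCategory

variable {C : Type u} [Category.{v} C]

section Monoidal

attribute [local instance] CategoryTheory.Abelian.hasFiniteBiproducts

variable [Abelian C] [MonoidalCategory C] [SymmetricCategory C] [MonoidalClosed C]

lemma epi_whiskerLeft_aux (X : C) {A B : C} (g : A ⟶ B) [Epi g] : Epi (X ◁ g) := by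
  haveI : (tensorLeft X).IsLeftAdjoint := ⟨ihom X, ⟨ihom.adjunction X⟩⟩
  show Epi ((tensorLeft X).map g)
  infer_instance

lemma epi_whiskerRight_aux {A B : C} (f : A ⟶ B) [Epi f] (Y : C) : Epi (f ▷ Y) := by
  haveI := epi_whiskerLeft_aux Y f
  have heq : f ▷ Y = ((β_ A Y).hom ≫ (Y ◁ f)) ≫ (β_ B Y).inv :=
    (Iso.eq_comp_inv _).mpr (BraidedCategory.braiding_naturality_left f Y)
  rw [heq]
  exact epi_comp _ _

lemma whiskerRight_jointlyEpi {ι : Type*} [Fintype ι] (x : ι → C) (Q : C) {Z : C}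
    (a b : (⨁ x) ⊗ Q ⟶ Z)
    (h : ∀ i, (biproduct.ι x i ▷ Q) ≫ a = (biproduct.ι x i ▷ Q) ≫ b) : a = b := by
  have hc : MonoidalClosed.curry ((β_ Q (⨁ x)).hom ≫ a)
      = MonoidalClosed.curry ((β_ Q (⨁ x)).hom ≫ b) := by
    apply biproduct.hom_ext'
    intro i
    rw [← MonoidalClosed.curry_natural_left, ← MonoidalClosed.curry_natural_left]
    congr 1
    rw [← Category.assoc, ← Category.assoc, BraidedCategory.braiding_naturality_right,
      Category.assoc, Category.assoc, h i]
  have hβ := MonoidalClosed.curry_injective hc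
  exact (cancel_epi (β_ Q (⨁ x)).hom).mp hβ

lemma isFinitelyGenerated_tensor (hV1 : IsFinitelyPresented (𝟙_ C)) (hV3 : IsSeparator (𝟙_ C))
    {X Y : C} (hX : IsFinitelyGenerated X) (hY : IsFinitelyGenerated Y) :
    IsFinitelyGenerated (X ⊗ Y) := by
  have hVfg : IsFinitelyGenerated (𝟙_ C) := fun J _ _ D c hc => (hV1 J D c hc).injective
  obtain ⟨s, hs⟩ := exists_epi_of_isFinitelyGenerated hV3 hX
  obtain ⟨t, ht⟩ := exists_epi_of_isFinitelyGenerated hV3 hY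
  set Q := ⨁ fun (_ : {h // h ∈ t}) => (𝟙_ C) with hQdef
  have hQ : IsFinitelyGenerated Q := isFinitelyGenerated_biproduct _ (fun _ => hVfg)
  have hVQ : IsFinitelyGenerated ((𝟙_ C) ⊗ Q) := isFinitelyGenerated_of_epi (λ_ Q).inv hQ
  have hPQ : IsFinitelyGenerated ((⨁ fun (_ : {h // h ∈ s}) => (𝟙_ C)) ⊗ Q) := by
    refine isFinitelyGenerated_of_jointlyEpi
      (fun i => biproduct.ι (fun (_ : {h // h ∈ s}) => (𝟙_ C)) i ▷ Q) (fun _ => hVQ) ?_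
    intro Z a b h
    exact whiskerRight_jointlyEpi _ _ a b h
  haveI := hs
  haveI := ht
  haveI h1 : Epi (eS (𝟙_ C) X s ▷ Q) := epi_whiskerRight_aux _ _
  haveI h2 : Epi (X ◁ eS (𝟙_ C) Y t) := epi_whiskerLeft_aux _ _
  haveI : Epi ((eS (𝟙_ C) X s ▷ Q) ≫ (X ◁ eS (𝟙_ C) Y t)) := epi_comp _ _
  exact isFinitelyGenerated_of_epi ((eS (𝟙_ C) X s ▷ Q) ≫ (X ◁ eS (𝟙_ C) Y t)) hPQ

end Monoidal

end Paper


namespace Paper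

open MonoidalCategory in
/-- In a locally presentable closed symmetric monoidal abelian category whose
unit is a finitely presented projective separator, the pushout product of two morphisms with
finitely generated (co)domains has finitely generated source and target. -/
theorem statement9 {C : Type u} [Category.{v} C] [Abelian C] [MonoidalCategory C]
    [SymmetricCategory C] [MonoidalClosed C] [LocallyPresentable C]
    (hV1 : IsFinitelyPresented (𝟙_ C)) (hV2 : Projective (𝟙_ C))
    (hV3 : IsSeparator (𝟙_ C))
    {X0 X1 Y0 Y1 : C} (f : X0 ⟶ X1) (g : Y0 ⟶ Y1)
    (hX0 : IsFinitelyGenerated X0) (hX1 : IsFinitelyGenerated X1)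
    (hY0 : IsFinitelyGenerated Y0) (hY1 : IsFinitelyGenerated Y1) :
    IsFinitelyGenerated (pushout (X0 ◁ g) (f ▷ Y0)) ∧ IsFinitelyGenerated (X1 ⊗ Y1) := by
  have hT : ∀ {A B : C}, IsFinitelyGenerated A → IsFinitelyGenerated B →
      IsFinitelyGenerated (A ⊗ B) := fun hA hB => isFinitelyGenerated_tensor hV1 hV3 hA hB
  constructor
  · refine isFinitelyGenerated_of_jointlyEpi (ι := Bool)
      (x := fun b => bif b then X0 ⊗ Y1 else X1 ⊗ Y0)
      (fun b => match b with
        | true => pushout.inl (X0 ◁ g) (f ▷ Y0)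
        | false => pushout.inr (X0 ◁ g) (f ▷ Y0)) ?_ ?_
    · intro b
      cases b
      · exact hT hX1 hY0
      · exact hT hX0 hY1
    · intro Z a b h
      exact pushout.hom_ext (h true) (h false)
  · exact hT hX1 hY1

end Paper
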